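/- Let σ ∈ Λ²₊V be a unit vector. Then for all X, Y ∈ V the 2-vector X∧Y − (K_σX)∧(K_σY) is orthogonal to Λ²₋V, i.e. it lies in Λ²₊V. -/

import Mathlib

open scoped RealInnerProductSpace

set_option maxHeartbeats 4000000 in
/-- Let `V` be a 4-dimensional oriented real inner product space with Hodge
star `⋆` on `Λ²V`, and let `σ ∈ Λ²₊V` be a unit vector.  Then for all `X, Y ∈ V` the
2-vector `X∧Y − (K_σX)∧(K_σY)` is orthogonal to `Λ²₋V`, i.e. it lies in `Λ²₊V`. -/
theorem stmt_7 {V L : Type*}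
    [NormedAddCommGroup V] [InnerProductSpace ℝ V]
    [NormedAddCommGroup L] [InnerProductSpace ℝ L]
    (h4 : Module.finrank ℝ V = 4)
    (o : Orientation ℝ V (Fin 4))
    (wedge : V →ₗ[ℝ] V →ₗ[ℝ] L)
    (wedge_self : ∀ v : V, wedge v v = 0)
    (wedge_span : Submodule.span ℝ {x : L | ∃ u v : V, wedge u v = x} = ⊤)
    (inner_wedge : ∀ v₁ v₂ v₃ v₄ : V,
      ⟪wedge v₁ v₂, wedge v₃ v₄⟫ =
        (1 / 2) * (⟪v₁, v₃⟫ * ⟪v₂, v₄⟫ - ⟪v₁, v₄⟫ * ⟪v₂, v₃⟫))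
    (hodge : L →ₗ[ℝ] L)
    (hodge_hodge : ∀ x : L, hodge (hodge x) = x)
    (hodge_wedge : ∀ b : OrthonormalBasis (Fin 4) ℝ V, b.toBasis.orientation = o →
      hodge (wedge (b 0) (b 1)) = wedge (b 2) (b 3) ∧
      hodge (wedge (b 0) (b 2)) = wedge (b 3) (b 1) ∧
      hodge (wedge (b 0) (b 3)) = wedge (b 1) (b 2))
    (σ : L) (hσ : hodge σ = σ) (hσ1 : ‖σ‖ = 1)
    (K : V →ₗ[ℝ] V)
    (hK : ∀ X Y : V, ⟪K X, Y⟫ = 2 * ⟪σ, wedge X Y⟫) :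
    ∀ X Y : V,
      (∀ τ : L, hodge τ = -τ → ⟪wedge X Y - wedge (K X) (K Y), τ⟫ = 0) ∧
      hodge (wedge X Y - wedge (K X) (K Y)) = wedge X Y - wedge (K X) (K Y) := by
  obtain ⟨b, hbo⟩ : ∃ b : OrthonormalBasis (Fin 4) ℝ V, b.toBasis.orientation = o :=
    ⟨o.finOrthonormalBasis (by norm_num) h4, o.finOrthonormalBasis_orientation _ _⟩
  obtain ⟨h01, h02, h03⟩ := hodge_wedge b hbo
  have hortho : ∀ i j : Fin 4, ⟪b i, b j⟫ = if i = j then (1:ℝ) else 0 :=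
    orthonormal_iff_ite.mp b.orthonormal
  have wanti : ∀ u v : V, wedge v u = - wedge u v := by
    intro u v
    have h := wedge_self (u + v)
    simp only [map_add, LinearMap.add_apply, wedge_self u, wedge_self v, zero_add, add_zero] at h
    exact eq_neg_of_add_eq_zero_left h
  have h23 : hodge (wedge (b 2) (b 3)) = wedge (b 0) (b 1) := by rw [← h01, hodge_hodge]
  have h12 : hodge (wedge (b 1) (b 2)) = wedge (b 0) (b 3) := by rw [← h03, hodge_hodge]
  have h13 : hodge (wedge (b 1) (b 3)) = -(wedge (b 0) (b 2)) := by
    have h := hodge_hodge (wedge (b 0) (b 2))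
    rw [h02] at h
    rw [wanti (b 3) (b 1), map_neg, h]
  have iww : ∀ i j k l : Fin 4, ⟪wedge (b i) (b j), wedge (b k) (b l)⟫ =
      (1/2) * ((if i = k then (1:ℝ) else 0) * (if j = l then (1:ℝ) else 0) -
        (if i = l then (1:ℝ) else 0) * (if j = k then (1:ℝ) else 0)) := by
    intro i j k l
    rw [inner_wedge, hortho, hortho, hortho, hortho]
  set g : Fin 6 → L := ![wedge (b 0) (b 1), wedge (b 0) (b 2), wedge (b 0) (b 3),
    wedge (b 1) (b 2), wedge (b 1) (b 3), wedge (b 2) (b 3)] with hg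
  have hwmem : ∀ i j : Fin 4, wedge (b i) (b j) ∈ Submodule.span ℝ (Set.range g) := by
    intro i j
    fin_cases i <;> fin_cases j <;>
      first
        | (rw [wedge_self]; exact Submodule.zero_mem _)
        | exact Submodule.subset_span ⟨0, rfl⟩
        | exact Submodule.subset_span ⟨1, rfl⟩
        | exact Submodule.subset_span ⟨2, rfl⟩
        | exact Submodule.subset_span ⟨3, rfl⟩
        | exact Submodule.subset_span ⟨4, rfl⟩
        | exact Submodule.subset_span ⟨5, rfl⟩
        | (rw [wanti]; exact Submodule.neg_mem _ (Submodule.subset_span ⟨0, rfl⟩))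
        | (rw [wanti]; exact Submodule.neg_mem _ (Submodule.subset_span ⟨1, rfl⟩))
        | (rw [wanti]; exact Submodule.neg_mem _ (Submodule.subset_span ⟨2, rfl⟩))
        | (rw [wanti]; exact Submodule.neg_mem _ (Submodule.subset_span ⟨3, rfl⟩))
        | (rw [wanti]; exact Submodule.neg_mem _ (Submodule.subset_span ⟨4, rfl⟩))
        | (rw [wanti]; exact Submodule.neg_mem _ (Submodule.subset_span ⟨5, rfl⟩))
  have hgtop : Submodule.span ℝ (Set.range g) = ⊤ := by
    rw [eq_top_iff, ← wedge_span, Submodule.span_le]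
    rintro x ⟨u, v, rfl⟩
    have expand : wedge u v = ∑ i : Fin 4, ∑ j : Fin 4,
        (⟪b i, u⟫ * ⟪b j, v⟫) • wedge (b i) (b j) := by
      conv_lhs => rw [← b.sum_repr' u, ← b.sum_repr' v]
      simp only [map_sum, map_smul, LinearMap.sum_apply, LinearMap.smul_apply,
        Finset.smul_sum, smul_smul]
      rw [Finset.sum_comm]
      exact Finset.sum_congr rfl fun i _ => Finset.sum_congr rfl fun j _ => by rw [mul_comm]
    rw [expand]
    exact Submodule.sum_mem _ fun i _ => Submodule.sum_mem _ fun j _ =>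
      Submodule.smul_mem _ _ (hwmem i j)
  have hexp : ∀ z : L, ∃ cc : Fin 6 → ℝ,
      z = cc 0 • wedge (b 0) (b 1) + cc 1 • wedge (b 0) (b 2) + cc 2 • wedge (b 0) (b 3) +
          cc 3 • wedge (b 1) (b 2) + cc 4 • wedge (b 1) (b 3) + cc 5 • wedge (b 2) (b 3) := by
    intro z
    have hz : z ∈ Submodule.span ℝ (Set.range g) := by rw [hgtop]; trivial
    obtain ⟨cc, hcc⟩ := (Submodule.mem_span_range_iff_exists_fun (R := ℝ) (v := g)).mp hz
    refine ⟨cc, ?_⟩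
    rw [← hcc, Fin.sum_univ_six]
    rfl
  have hodge_formula : ∀ (z : L) (cc : Fin 6 → ℝ),
      z = cc 0 • wedge (b 0) (b 1) + cc 1 • wedge (b 0) (b 2) + cc 2 • wedge (b 0) (b 3) +
          cc 3 • wedge (b 1) (b 2) + cc 4 • wedge (b 1) (b 3) + cc 5 • wedge (b 2) (b 3) →
      hodge z = cc 5 • wedge (b 0) (b 1) + (-(cc 4)) • wedge (b 0) (b 2) +
          cc 3 • wedge (b 0) (b 3) + cc 2 • wedge (b 1) (b 2) +
          (-(cc 1)) • wedge (b 1) (b 3) + cc 0 • wedge (b 2) (b 3) := by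
    intro z cc hz
    rw [hz]
    simp only [map_add, map_smul, h01, h02, h03, h12, h13, h23]
    rw [wanti (b 1) (b 3)]
    module
  -- expansion of σ and its coefficient relations
  obtain ⟨c, hσe⟩ := hexp σ
  have hσcomb := hodge_formula σ c hσe
  rw [hσ, hσe] at hσcomb
  have hr1 : c 5 = c 0 := by
    have h' := congrArg (fun z => ⟪z, wedge (b 0) (b 1)⟫) hσcomb
    simp [inner_add_left, inner_neg_left, real_inner_smul_left, iww, -inner_self_eq_norm_sq_to_K] at h'
    linarith
  have hr2 : c 4 = -(c 1) := by
    have h' := congrArg (fun z => ⟪z, wedge (b 0) (b 2)⟫) hσcomb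
    simp [inner_add_left, inner_neg_left, real_inner_smul_left, iww, -inner_self_eq_norm_sq_to_K] at h'
    linarith
  have hr3 : c 3 = c 2 := by
    have h' := congrArg (fun z => ⟪z, wedge (b 0) (b 3)⟫) hσcomb
    simp [inner_add_left, inner_neg_left, real_inner_smul_left, iww, -inner_self_eq_norm_sq_to_K] at h'
    linarith
  rw [hr1, hr2, hr3] at hσe
  have hσσ : ⟪σ, σ⟫ = 1 := by
    have h := real_inner_self_eq_norm_mul_norm σ
    rw [hσ1] at h
    simpa using h
  have hpqr : c 0 ^ 2 + c 1 ^ 2 + c 2 ^ 2 = 1 := by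
    rw [hσe] at hσσ
    simp [inner_add_left, inner_add_right, inner_neg_left, inner_neg_right,
      real_inner_smul_left, real_inner_smul_right, iww, -inner_self_eq_norm_sq_to_K] at hσσ
    nlinarith [hσσ]
  -- K on basis vectors
  have hKb : ∀ i : Fin 4, K (b i) = ∑ j, (2 * ⟪σ, wedge (b i) (b j)⟫) • b j := by
    intro i
    conv_lhs => rw [← b.sum_repr' (K (b i))]
    refine Finset.sum_congr rfl fun j _ => ?_
    rw [real_inner_comm, hK]
  have hK0 : K (b 0) = c 0 • b 1 + c 1 • b 2 + c 2 • b 3 := by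
    rw [hKb, Fin.sum_univ_four, hσe]
    simp only [inner_add_left, inner_neg_left, real_inner_smul_left, iww, wedge_self,
      inner_zero_right, Fin.reduceEq, reduceIte]
    module
  have hK1 : K (b 1) = (-(c 0)) • b 0 + c 2 • b 2 + (-(c 1)) • b 3 := by
    rw [hKb, Fin.sum_univ_four, hσe]
    simp only [inner_add_left, inner_neg_left, real_inner_smul_left, iww, wedge_self,
      inner_zero_right, Fin.reduceEq, reduceIte]
    module
  have hK2 : K (b 2) = (-(c 1)) • b 0 + (-(c 2)) • b 1 + c 0 • b 3 := by
    rw [hKb, Fin.sum_univ_four, hσe]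
    simp only [inner_add_left, inner_neg_left, real_inner_smul_left, iww, wedge_self,
      inner_zero_right, Fin.reduceEq, reduceIte]
    module
  have hK3 : K (b 3) = (-(c 2)) • b 0 + c 1 • b 1 + (-(c 0)) • b 2 := by
    rw [hKb, Fin.sum_univ_four, hσe]
    simp only [inner_add_left, inner_neg_left, real_inner_smul_left, iww, wedge_self,
      inner_zero_right, Fin.reduceEq, reduceIte]
    module
  -- the submodule of self-dual elements we need
  set SS : Submodule ℝ L := Submodule.span ℝ
    ({wedge (b 0) (b 1) + wedge (b 2) (b 3),
      wedge (b 0) (b 2) - wedge (b 1) (b 3),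
      wedge (b 0) (b 3) + wedge (b 1) (b 2)} : Set L) with hSS
  have memSS : ∀ a1 a2 a3 : ℝ,
      a1 • (wedge (b 0) (b 1) + wedge (b 2) (b 3)) +
      a2 • (wedge (b 0) (b 2) - wedge (b 1) (b 3)) +
      a3 • (wedge (b 0) (b 3) + wedge (b 1) (b 2)) ∈ SS := by
    intro a1 a2 a3
    exact Submodule.add_mem _ (Submodule.add_mem _
      (Submodule.smul_mem _ _ (Submodule.subset_span (by simp)))
      (Submodule.smul_mem _ _ (Submodule.subset_span (by simp))))
      (Submodule.smul_mem _ _ (Submodule.subset_span (by simp)))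
  have hSS_hodge : ∀ z ∈ SS, hodge z = z := by
    intro z hz
    induction hz using Submodule.span_induction with
    | mem x hx =>
      simp only [Set.mem_insert_iff, Set.mem_singleton_iff] at hx
      rcases hx with rfl | rfl | rfl
      · simp only [map_add, h01, h23]; abel
      · simp only [map_sub, h02, h13]; rw [wanti (b 1) (b 3)]; abel
      · simp only [map_add, h03, h12]; abel
    | zero => simp
    | add x y _ _ ihx ihy => simp only [map_add, ihx, ihy]
    | smul a x _ ihx => simp only [map_smul, ihx]
  have hSS_inner : ∀ τ : L, hodge τ = -τ → ∀ z ∈ SS, ⟪z, τ⟫ = 0 := by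
    intro τ hτ
    obtain ⟨d, hτe⟩ := hexp τ
    have hτcomb := hodge_formula τ d hτe
    rw [hτ] at hτcomb
    have hτcomb' : -τ = _ := hτcomb
    rw [hτe] at hτcomb'
    have hd1 : d 5 = -(d 0) := by
      have h' := congrArg (fun z => ⟪z, wedge (b 0) (b 1)⟫) hτcomb'
      simp only [inner_add_left, inner_neg_left, real_inner_smul_left, iww,
        Fin.reduceEq, reduceIte] at h'
      linarith
    have hd2 : d 4 = d 1 := by
      have h' := congrArg (fun z => ⟪z, wedge (b 0) (b 2)⟫) hτcomb'
      simp only [inner_add_left, inner_neg_left, real_inner_smul_left, iww,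
        Fin.reduceEq, reduceIte] at h'
      linarith
    have hd3 : d 3 = -(d 2) := by
      have h' := congrArg (fun z => ⟪z, wedge (b 0) (b 3)⟫) hτcomb'
      simp only [inner_add_left, inner_neg_left, real_inner_smul_left, iww,
        Fin.reduceEq, reduceIte] at h'
      linarith
    intro z hz
    induction hz using Submodule.span_induction with
    | mem x hx =>
      simp only [Set.mem_insert_iff, Set.mem_singleton_iff] at hx
      rcases hx with rfl | rfl | rfl <;>
        · rw [hτe]
          simp only [inner_add_left, inner_add_right, inner_sub_left, inner_neg_right,
            real_inner_smul_right, iww, Fin.reduceEq, reduceIte]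
          rw [hd1, hd2, hd3]; ring
    | zero => simp
    | add x y _ _ ihx ihy => simp only [inner_add_left, ihx, ihy, add_zero]
    | smul a x _ ihx => simp only [real_inner_smul_left, ihx, mul_zero]
  -- the six basic membership facts
  have hm01 : wedge (b 0) (b 1) - wedge (K (b 0)) (K (b 1)) ∈ SS := by
    have F : wedge (b 0) (b 1) - wedge (K (b 0)) (K (b 1)) =
        (c 1 ^ 2 + c 2 ^ 2) • (wedge (b 0) (b 1) + wedge (b 2) (b 3)) +
        (-(c 0 * c 1)) • (wedge (b 0) (b 2) - wedge (b 1) (b 3)) +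
        (-(c 0 * c 2)) • (wedge (b 0) (b 3) + wedge (b 1) (b 2)) := by
      rw [hK0, hK1]
      simp only [map_add, map_smul, map_sub, map_neg, LinearMap.add_apply,
        LinearMap.smul_apply, LinearMap.sub_apply, LinearMap.neg_apply, wedge_self,
        wanti (b 0) (b 1), wanti (b 0) (b 2), wanti (b 0) (b 3),
        wanti (b 1) (b 2), wanti (b 1) (b 3), wanti (b 2) (b 3)]
      match_scalars <;>
        first
          | ring1
          | linear_combination hpqr
          | linear_combination -hpqr
    rw [F]; exact memSS _ _ _
  have hm02 : wedge (b 0) (b 2) - wedge (K (b 0)) (K (b 2)) ∈ SS := by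
    have F : wedge (b 0) (b 2) - wedge (K (b 0)) (K (b 2)) =
        (-(c 0 * c 1)) • (wedge (b 0) (b 1) + wedge (b 2) (b 3)) +
        (c 0 ^ 2 + c 2 ^ 2) • (wedge (b 0) (b 2) - wedge (b 1) (b 3)) +
        (-(c 1 * c 2)) • (wedge (b 0) (b 3) + wedge (b 1) (b 2)) := by
      rw [hK0, hK2]
      simp only [map_add, map_smul, map_sub, map_neg, LinearMap.add_apply,
        LinearMap.smul_apply, LinearMap.sub_apply, LinearMap.neg_apply, wedge_self,
        wanti (b 0) (b 1), wanti (b 0) (b 2), wanti (b 0) (b 3),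
        wanti (b 1) (b 2), wanti (b 1) (b 3), wanti (b 2) (b 3)]
      match_scalars <;>
        first
          | ring1
          | linear_combination hpqr
          | linear_combination -hpqr
    rw [F]; exact memSS _ _ _
  have hm03 : wedge (b 0) (b 3) - wedge (K (b 0)) (K (b 3)) ∈ SS := by
    have F : wedge (b 0) (b 3) - wedge (K (b 0)) (K (b 3)) =
        (-(c 0 * c 2)) • (wedge (b 0) (b 1) + wedge (b 2) (b 3)) +
        (-(c 1 * c 2)) • (wedge (b 0) (b 2) - wedge (b 1) (b 3)) +
        (c 0 ^ 2 + c 1 ^ 2) • (wedge (b 0) (b 3) + wedge (b 1) (b 2)) := by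
      rw [hK0, hK3]
      simp only [map_add, map_smul, map_sub, map_neg, LinearMap.add_apply,
        LinearMap.smul_apply, LinearMap.sub_apply, LinearMap.neg_apply, wedge_self,
        wanti (b 0) (b 1), wanti (b 0) (b 2), wanti (b 0) (b 3),
        wanti (b 1) (b 2), wanti (b 1) (b 3), wanti (b 2) (b 3)]
      match_scalars <;>
        first
          | ring1
          | linear_combination hpqr
          | linear_combination -hpqr
    rw [F]; exact memSS _ _ _
  have hm12 : wedge (b 1) (b 2) - wedge (K (b 1)) (K (b 2)) ∈ SS := by
    have F : wedge (b 1) (b 2) - wedge (K (b 1)) (K (b 2)) =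
        (-(c 0 * c 2)) • (wedge (b 0) (b 1) + wedge (b 2) (b 3)) +
        (-(c 1 * c 2)) • (wedge (b 0) (b 2) - wedge (b 1) (b 3)) +
        (c 0 ^ 2 + c 1 ^ 2) • (wedge (b 0) (b 3) + wedge (b 1) (b 2)) := by
      rw [hK1, hK2]
      simp only [map_add, map_smul, map_sub, map_neg, LinearMap.add_apply,
        LinearMap.smul_apply, LinearMap.sub_apply, LinearMap.neg_apply, wedge_self,
        wanti (b 0) (b 1), wanti (b 0) (b 2), wanti (b 0) (b 3),
        wanti (b 1) (b 2), wanti (b 1) (b 3), wanti (b 2) (b 3)]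
      match_scalars <;>
        first
          | ring1
          | linear_combination hpqr
          | linear_combination -hpqr
    rw [F]; exact memSS _ _ _
  have hm13 : wedge (b 1) (b 3) - wedge (K (b 1)) (K (b 3)) ∈ SS := by
    have F : wedge (b 1) (b 3) - wedge (K (b 1)) (K (b 3)) =
        (c 0 * c 1) • (wedge (b 0) (b 1) + wedge (b 2) (b 3)) +
        (-(c 0 ^ 2 + c 2 ^ 2)) • (wedge (b 0) (b 2) - wedge (b 1) (b 3)) +
        (c 1 * c 2) • (wedge (b 0) (b 3) + wedge (b 1) (b 2)) := by
      rw [hK1, hK3]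
      simp only [map_add, map_smul, map_sub, map_neg, LinearMap.add_apply,
        LinearMap.smul_apply, LinearMap.sub_apply, LinearMap.neg_apply, wedge_self,
        wanti (b 0) (b 1), wanti (b 0) (b 2), wanti (b 0) (b 3),
        wanti (b 1) (b 2), wanti (b 1) (b 3), wanti (b 2) (b 3)]
      match_scalars <;>
        first
          | ring1
          | linear_combination hpqr
          | linear_combination -hpqr
    rw [F]; exact memSS _ _ _
  have hm23 : wedge (b 2) (b 3) - wedge (K (b 2)) (K (b 3)) ∈ SS := by
    have F : wedge (b 2) (b 3) - wedge (K (b 2)) (K (b 3)) =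
        (c 1 ^ 2 + c 2 ^ 2) • (wedge (b 0) (b 1) + wedge (b 2) (b 3)) +
        (-(c 0 * c 1)) • (wedge (b 0) (b 2) - wedge (b 1) (b 3)) +
        (-(c 0 * c 2)) • (wedge (b 0) (b 3) + wedge (b 1) (b 2)) := by
      rw [hK2, hK3]
      simp only [map_add, map_smul, map_sub, map_neg, LinearMap.add_apply,
        LinearMap.smul_apply, LinearMap.sub_apply, LinearMap.neg_apply, wedge_self,
        wanti (b 0) (b 1), wanti (b 0) (b 2), wanti (b 0) (b 3),
        wanti (b 1) (b 2), wanti (b 1) (b 3), wanti (b 2) (b 3)]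
      match_scalars <;>
        first
          | ring1
          | linear_combination hpqr
          | linear_combination -hpqr
    rw [F]; exact memSS _ _ _
  have hWanti : ∀ u v : V, wedge v u - wedge (K v) (K u) =
      -(wedge u v - wedge (K u) (K v)) := by
    intro u v
    rw [wanti u v, wanti (K u) (K v)]
    abel
  have hS : ∀ i j : Fin 4, wedge (b i) (b j) - wedge (K (b i)) (K (b j)) ∈ SS := by
    intro i j
    fin_cases i <;> fin_cases j
    · simp only [wedge_self, sub_zero]; exact Submodule.zero_mem _
    · exact hm01
    · exact hm02
    · exact hm03
    · rw [hWanti]; exact Submodule.neg_mem _ hm01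
    · simp only [wedge_self, sub_zero]; exact Submodule.zero_mem _
    · exact hm12
    · exact hm13
    · rw [hWanti]; exact Submodule.neg_mem _ hm02
    · rw [hWanti]; exact Submodule.neg_mem _ hm12
    · simp only [wedge_self, sub_zero]; exact Submodule.zero_mem _
    · exact hm23
    · rw [hWanti]; exact Submodule.neg_mem _ hm03
    · rw [hWanti]; exact Submodule.neg_mem _ hm13
    · rw [hWanti]; exact Submodule.neg_mem _ hm23
    · simp only [wedge_self, sub_zero]; exact Submodule.zero_mem _
  have hVtop : ∀ X : V, X ∈ Submodule.span ℝ (Set.range (b : Fin 4 → V)) := by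
    intro X
    have h : Submodule.span ℝ (Set.range (b : Fin 4 → V)) = ⊤ := by
      rw [← b.coe_toBasis]; exact b.toBasis.span_eq
    rw [h]; trivial
  have key : ∀ X Y : V, wedge X Y - wedge (K X) (K Y) ∈ SS := by
    have key1 : ∀ (i : Fin 4) (Y : V), wedge (b i) Y - wedge (K (b i)) (K Y) ∈ SS := by
      intro i Y
      induction hVtop Y using Submodule.span_induction with
      | mem y hy =>
        obtain ⟨j, rfl⟩ := hy
        exact hS i j
      | zero => simp only [map_zero, sub_zero]; exact Submodule.zero_mem _
      | add y z _ _ ihy ihz =>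
        have e : wedge (b i) (y + z) - wedge (K (b i)) (K (y + z)) =
            (wedge (b i) y - wedge (K (b i)) (K y)) +
            (wedge (b i) z - wedge (K (b i)) (K z)) := by
          simp only [map_add]; abel
        rw [e]; exact Submodule.add_mem _ ihy ihz
      | smul a y _ ihy =>
        have e : wedge (b i) (a • y) - wedge (K (b i)) (K (a • y)) =
            a • (wedge (b i) y - wedge (K (b i)) (K y)) := by
          simp only [map_smul, smul_sub]
        rw [e]; exact Submodule.smul_mem _ _ ihy
    intro X Y
    induction hVtop X using Submodule.span_induction with
    | mem x hx =>
      obtain ⟨i, rfl⟩ := hx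
      exact key1 i Y
    | zero =>
      simp only [map_zero, LinearMap.zero_apply, sub_zero]
      exact Submodule.zero_mem _
    | add x y _ _ ihx ihy =>
      have e : wedge (x + y) Y - wedge (K (x + y)) (K Y) =
          (wedge x Y - wedge (K x) (K Y)) + (wedge y Y - wedge (K y) (K Y)) := by
        simp only [map_add, LinearMap.add_apply]; abel
      rw [e]; exact Submodule.add_mem _ ihx ihy
    | smul a x _ ihx =>
      have e : wedge (a • x) Y - wedge (K (a • x)) (K Y) =
          a • (wedge x Y - wedge (K x) (K Y)) := by
        simp only [map_smul, LinearMap.smul_apply, smul_sub]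
      rw [e]; exact Submodule.smul_mem _ _ ihx
  intro X Y
  exact ⟨fun τ hτ => hSS_inner τ hτ _ (key X Y), hSS_hodge _ (key X Y)⟩
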